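/- Let k ≥ 1 and let c : ℕ → ℤ satisfy c i = c (4k+2 - i) for 0 ≤ i ≤ 4k+2 and c i = 0 for i > 4k+2. Let χ_y = ∑_{i=0}^{4k+2}(c i)y^i, τ = c 0, σ = ∑_{i=0}^{4k+2} c i, and e = ∑_{i=0}^{4k+2}(-1)^i c i. Then 4·χ_y = 4τ·(1 - y^{2k})·(1 - y^{2k+2}) + σ·y^{2k}·(1+y)^2 + e·y^{2k}·(1-y)^2 + ∑_{j=1}^{k-1} 4·(c (2j))·y^{2j}·(1 - y^{2k-2j})·(1 - y^{2k-2j+2}) + ∑_{j=1}^{k} 4·(c (2j-1))·y^{2j-1}·(1 - y^{2k-2j+2})^2 as polynomials in ℤ[y]. -/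

import Mathlib

open Polynomial Finset

private lemma sum_split_parity {M : Type*} [AddCommMonoid M] (f : ℕ → M) (n : ℕ) :
    ∑ i ∈ range (2 * n + 1), f i =
      (∑ m ∈ range (n + 1), f (2 * m)) + ∑ m ∈ range n, f (2 * m + 1) := by
  induction n with
  | zero => simp
  | succ n ih =>
    have h1 : 2 * (n + 1) + 1 = (2 * n + 1) + 1 + 1 := by ring
    rw [h1, sum_range_succ, sum_range_succ, ih, sum_range_succ (fun m => f (2 * m)) (n + 1),
      sum_range_succ (fun m => f (2 * m + 1)) n]
    have h2 : 2 * n + 1 + 1 = 2 * (n + 1) := by ring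
    rw [h2]
    ac_rfl

private lemma sum_range_two_mul' {M : Type*} [AddCommMonoid M] (f : ℕ → M) (n : ℕ) :
    ∑ i ∈ range (2 * n), f i = ∑ i ∈ range n, (f i + f (2 * n - 1 - i)) := by
  rw [two_mul, Finset.sum_range_add, ← Finset.sum_range_reflect (fun i => f (n + i)) n,
    ← Finset.sum_add_distrib]
  refine Finset.sum_congr rfl fun i hi => ?_
  simp only [mem_range] at hi
  congr 2
  omega

private lemma sum_range_two_mul_add_one' {M : Type*} [AddCommMonoid M] (f : ℕ → M) (n : ℕ) :
    ∑ i ∈ range (2 * n + 1), f i = (∑ i ∈ range n, (f i + f (2 * n - i))) + f n := by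
  have h : 2 * n + 1 = n + 1 + n := by ring
  have hre : ∑ j ∈ range n, f (n + 1 + (n - 1 - j)) = ∑ i ∈ range n, f (2 * n - i) :=
    Finset.sum_congr rfl fun i hi => by
      simp only [mem_range] at hi
      congr 1
      omega
  rw [h, Finset.sum_range_add, sum_range_succ,
    ← Finset.sum_range_reflect (fun i => f (n + 1 + i)) n, hre, Finset.sum_add_distrib,
    add_right_comm]

theorem chi_y_formula_dim_4k_plus_2 (k : ℕ) (hk : 1 ≤ k) (c : ℕ → ℤ)
    (hdual : ∀ i ≤ 4 * k + 2, c i = c (4 * k + 2 - i)) (hzero : ∀ i > 4 * k + 2, c i = 0) :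
    4 * (∑ i ∈ range (4 * k + 3), C (c i) * X ^ i) =
      C (4 * c 0) * (1 - X ^ (2 * k)) * (1 - X ^ (2 * k + 2)) +
      C (∑ i ∈ range (4 * k + 3), c i) * X ^ (2 * k) * (1 + X) ^ 2 +
      C (∑ i ∈ range (4 * k + 3), (-1) ^ i * c i) * X ^ (2 * k) * (1 - X) ^ 2 +
      (∑ j ∈ Finset.Icc 1 (k - 1),
        C (4 * c (2 * j)) * X ^ (2 * j) * (1 - X ^ (2 * k - 2 * j)) *
          (1 - X ^ (2 * k - 2 * j + 2))) +
      (∑ j ∈ Finset.Icc 1 k,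
        C (4 * c (2 * j - 1)) * X ^ (2 * j - 1) * (1 - X ^ (2 * k - 2 * j + 2)) ^ 2) := by
  obtain ⟨n, rfl⟩ : ∃ n, k = n + 1 := ⟨k - 1, by omega⟩
  have hC4 : ∀ a : ℤ, C (4 * a) = 4 * C a := fun a => by
    rw [C_mul, map_ofNat]
  simp only [hC4, Nat.add_sub_cancel]
  -- abbreviations (as equalities)
  have hL : (∑ i ∈ range (4 * (n + 1) + 3), C (c i) * X ^ i) =
      (∑ m ∈ range (n + 2), C (c (2 * m)) * (X ^ (2 * m) + X ^ (4 * (n + 1) + 2 - 2 * m))) +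
      (∑ m ∈ range (n + 1), C (c (2 * m + 1)) * (X ^ (2 * m + 1) + X ^ (4 * (n + 1) + 1 - 2 * m))) +
      C (c (2 * (n + 1) + 1)) * X ^ (2 * (n + 1) + 1) := by
    rw [show 4 * (n + 1) + 3 = 2 * (2 * (n + 1) + 1) + 1 from by ring, sum_split_parity]
    have hE : ∑ m ∈ range (2 * (n + 1) + 1 + 1), C (c (2 * m)) * X ^ (2 * m) =
        ∑ m ∈ range (n + 2), C (c (2 * m)) * (X ^ (2 * m) + X ^ (4 * (n + 1) + 2 - 2 * m)) := by
      rw [show 2 * (n + 1) + 1 + 1 = 2 * (n + 2) from by ring, sum_range_two_mul']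
      refine sum_congr rfl fun m hm => ?_
      simp only [mem_range] at hm
      have e1 : 2 * (2 * (n + 2) - 1 - m) = 4 * (n + 1) + 2 - 2 * m := by omega
      have e2 : c (4 * (n + 1) + 2 - 2 * m) = c (2 * m) := (hdual (2 * m) (by omega)).symm
      rw [e1, e2]
      ring
    have hO : ∑ m ∈ range (2 * (n + 1) + 1), C (c (2 * m + 1)) * X ^ (2 * m + 1) =
        (∑ m ∈ range (n + 1), C (c (2 * m + 1)) * (X ^ (2 * m + 1) + X ^ (4 * (n + 1) + 1 - 2 * m))) +
        C (c (2 * (n + 1) + 1)) * X ^ (2 * (n + 1) + 1) := by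
      rw [sum_range_two_mul_add_one' (fun m => C (c (2 * m + 1)) * X ^ (2 * m + 1)) (n + 1)]
      congr 1
      refine sum_congr rfl fun m hm => ?_
      simp only [mem_range] at hm
      have e1 : 2 * (2 * (n + 1) - m) + 1 = 4 * (n + 1) + 1 - 2 * m := by omega
      have e2 : c (4 * (n + 1) + 1 - 2 * m) = c (2 * m + 1) := by
        have h := hdual (2 * m + 1) (by omega)
        have e3 : 4 * (n + 1) + 2 - (2 * m + 1) = 4 * (n + 1) + 1 - 2 * m := by omega
        rw [e3] at h
        exact h.symm
      rw [e1, e2]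
      ring
    rw [hE, hO, add_assoc]
  -- scalar parity sums
  have hEs : ∑ m ∈ range (2 * (n + 1) + 1 + 1), c (2 * m) = 2 * ∑ m ∈ range (n + 2), c (2 * m) := by
    rw [show 2 * (n + 1) + 1 + 1 = 2 * (n + 2) from by ring, sum_range_two_mul', Finset.mul_sum]
    refine sum_congr rfl fun m hm => ?_
    simp only [mem_range] at hm
    have e1 : 2 * (2 * (n + 2) - 1 - m) = 4 * (n + 1) + 2 - 2 * m := by omega
    rw [e1, ← hdual (2 * m) (by omega)]
    ring
  have hOs : ∑ m ∈ range (2 * (n + 1) + 1), c (2 * m + 1) =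
      2 * (∑ m ∈ range (n + 1), c (2 * m + 1)) + c (2 * (n + 1) + 1) := by
    rw [sum_range_two_mul_add_one' (fun m => c (2 * m + 1)) (n + 1)]
    congr 1
    rw [Finset.mul_sum]
    refine sum_congr rfl fun m hm => ?_
    simp only [mem_range] at hm
    have e1 : 2 * (2 * (n + 1) - m) + 1 = 4 * (n + 1) + 1 - 2 * m := by omega
    have h := hdual (2 * m + 1) (by omega)
    have e3 : 4 * (n + 1) + 2 - (2 * m + 1) = 4 * (n + 1) + 1 - 2 * m := by omega
    rw [e3] at h
    rw [e1, ← h]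
    ring
  have hσC : C (∑ i ∈ range (4 * (n + 1) + 3), c i) =
      2 * (∑ m ∈ range (n + 2), C (c (2 * m))) +
      (2 * (∑ m ∈ range (n + 1), C (c (2 * m + 1))) + C (c (2 * (n + 1) + 1))) := by
    rw [show 4 * (n + 1) + 3 = 2 * (2 * (n + 1) + 1) + 1 from by ring,
      sum_split_parity (fun i => c i), hEs, hOs]
    simp only [C_add, C_mul, C_neg, map_sum, map_ofNat]
    try ring
  have heC : C (∑ i ∈ range (4 * (n + 1) + 3), (-1) ^ i * c i) =
      2 * (∑ m ∈ range (n + 2), C (c (2 * m))) -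
      (2 * (∑ m ∈ range (n + 1), C (c (2 * m + 1))) + C (c (2 * (n + 1) + 1))) := by
    rw [show 4 * (n + 1) + 3 = 2 * (2 * (n + 1) + 1) + 1 from by ring,
      sum_split_parity (fun i => (-1 : ℤ) ^ i * c i)]
    have h1 : ∑ m ∈ range (2 * (n + 1) + 1 + 1), (-1 : ℤ) ^ (2 * m) * c (2 * m) =
        ∑ m ∈ range (2 * (n + 1) + 1 + 1), c (2 * m) :=
      sum_congr rfl fun m _ => by rw [Even.neg_one_pow (even_two_mul m), one_mul]
    have h2 : ∑ m ∈ range (2 * (n + 1) + 1), (-1 : ℤ) ^ (2 * m + 1) * c (2 * m + 1) =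
        -∑ m ∈ range (2 * (n + 1) + 1), c (2 * m + 1) := by
      rw [← Finset.sum_neg_distrib]
      exact sum_congr rfl fun m _ => by
        rw [Odd.neg_one_pow ⟨m, by ring⟩]
        ring
    rw [h1, h2, hEs, hOs]
    simp only [C_add, C_mul, C_neg, map_sum, map_ofNat]
    try ring
  -- splitting the even sums
  have hIcc : ∀ g : ℕ → ℤ[X], ∑ j ∈ Finset.Icc 1 n, g j = ∑ i ∈ range n, g (1 + i) := by
    intro g
    rw [← Finset.Ico_add_one_right_eq_Icc, Finset.sum_Ico_eq_sum_range]
    rfl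
  have hPE : ∑ m ∈ range (n + 2), C (c (2 * m)) =
      C (c 0) + (∑ j ∈ Finset.Icc 1 n, C (c (2 * j))) + C (c (2 * (n + 1))) := by
    rw [sum_range_succ, sum_range_succ', hIcc (fun j => C (c (2 * j)))]
    have : ∑ i ∈ range n, C (c (2 * (i + 1))) = ∑ i ∈ range n, C (c (2 * (1 + i))) :=
      sum_congr rfl fun i _ => by rw [add_comm 1 i]
    rw [this]
    norm_num
    ring
  have hSA : ∑ m ∈ range (n + 2), C (c (2 * m)) * (X ^ (2 * m) + X ^ (4 * (n + 1) + 2 - 2 * m)) =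
      C (c 0) * (1 + X ^ (4 * (n + 1) + 2)) +
      (∑ j ∈ Finset.Icc 1 n, C (c (2 * j)) * (X ^ (2 * j) + X ^ (4 * (n + 1) + 2 - 2 * j))) +
      C (c (2 * (n + 1))) * (X ^ (2 * (n + 1)) + X ^ (2 * (n + 1) + 2)) := by
    rw [sum_range_succ, sum_range_succ',
      hIcc (fun j => C (c (2 * j)) * (X ^ (2 * j) + X ^ (4 * (n + 1) + 2 - 2 * j)))]
    have h0 : C (c (2 * 0)) * (X ^ (2 * 0) + X ^ (4 * (n + 1) + 2 - 2 * 0)) =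
        C (c 0) * (1 + X ^ (4 * (n + 1) + 2)) := by norm_num
    have hlast : C (c (2 * (n + 1))) * (X ^ (2 * (n + 1)) + X ^ (4 * (n + 1) + 2 - 2 * (n + 1))) =
        C (c (2 * (n + 1))) * (X ^ (2 * (n + 1)) + X ^ (2 * (n + 1) + 2)) := by
      rw [show 4 * (n + 1) + 2 - 2 * (n + 1) = 2 * (n + 1) + 2 from by omega]
    have hmid : ∑ i ∈ range n, C (c (2 * (i + 1))) * (X ^ (2 * (i + 1)) + X ^ (4 * (n + 1) + 2 - 2 * (i + 1))) =
        ∑ i ∈ range n, C (c (2 * (1 + i))) * (X ^ (2 * (1 + i)) + X ^ (4 * (n + 1) + 2 - 2 * (1 + i))) :=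
      sum_congr rfl fun i _ => by rw [add_comm 1 i]
    rw [h0, hlast, hmid]
    ring
  -- the two Icc sums in the goal
  have hR4 : ∑ j ∈ Finset.Icc 1 n, 4 * C (c (2 * j)) * X ^ (2 * j) *
        (1 - X ^ (2 * (n + 1) - 2 * j)) * (1 - X ^ (2 * (n + 1) - 2 * j + 2)) =
      4 * (∑ j ∈ Finset.Icc 1 n, C (c (2 * j)) * (X ^ (2 * j) + X ^ (4 * (n + 1) + 2 - 2 * j))) -
      4 * ((∑ j ∈ Finset.Icc 1 n, C (c (2 * j))) * (X ^ (2 * (n + 1)) + X ^ (2 * (n + 1) + 2))) := by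
    have step : ∀ j ∈ Finset.Icc 1 n, 4 * C (c (2 * j)) * X ^ (2 * j) *
        (1 - X ^ (2 * (n + 1) - 2 * j)) * (1 - X ^ (2 * (n + 1) - 2 * j + 2)) =
        4 * (C (c (2 * j)) * (X ^ (2 * j) + X ^ (4 * (n + 1) + 2 - 2 * j))) -
        4 * (C (c (2 * j)) * (X ^ (2 * (n + 1)) + X ^ (2 * (n + 1) + 2))) := by
      intro j hj
      simp only [mem_Icc] at hj
      have p1 : (X : ℤ[X]) ^ (2 * j) * X ^ (2 * (n + 1) - 2 * j) = X ^ (2 * (n + 1)) := by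
        rw [← pow_add]; congr 1; omega
      have p2 : (X : ℤ[X]) ^ (2 * j) * X ^ (2 * (n + 1) - 2 * j + 2) = X ^ (2 * (n + 1) + 2) := by
        rw [← pow_add]; congr 1; omega
      have p3 : (X : ℤ[X]) ^ (2 * j) * (X ^ (2 * (n + 1) - 2 * j) * X ^ (2 * (n + 1) - 2 * j + 2)) =
          X ^ (4 * (n + 1) + 2 - 2 * j) := by
        rw [← pow_add, ← pow_add]; congr 1; omega
      linear_combination (4 * C (c (2 * j))) * p3 - (4 * C (c (2 * j))) * p1 -
        (4 * C (c (2 * j))) * p2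
    rw [Finset.sum_congr rfl step, Finset.sum_sub_distrib, ← Finset.mul_sum, ← Finset.mul_sum,
      ← Finset.sum_mul]
  have hR5 : ∑ j ∈ Finset.Icc 1 (n + 1), 4 * C (c (2 * j - 1)) * X ^ (2 * j - 1) *
        (1 - X ^ (2 * (n + 1) - 2 * j + 2)) ^ 2 =
      4 * (∑ m ∈ range (n + 1), C (c (2 * m + 1)) * (X ^ (2 * m + 1) + X ^ (4 * (n + 1) + 1 - 2 * m))) -
      8 * ((∑ m ∈ range (n + 1), C (c (2 * m + 1))) * X ^ (2 * (n + 1) + 1)) := by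
    rw [← Finset.Ico_add_one_right_eq_Icc, Finset.sum_Ico_eq_sum_range]
    simp only [Nat.add_sub_cancel]
    have step : ∀ i ∈ range (n + 1), 4 * C (c (2 * (1 + i) - 1)) * X ^ (2 * (1 + i) - 1) *
        (1 - X ^ (2 * (n + 1) - 2 * (1 + i) + 2)) ^ 2 =
        4 * (C (c (2 * i + 1)) * (X ^ (2 * i + 1) + X ^ (4 * (n + 1) + 1 - 2 * i))) -
        8 * (C (c (2 * i + 1)) * X ^ (2 * (n + 1) + 1)) := by
      intro i hi
      simp only [mem_range] at hi
      have e1 : 2 * (1 + i) - 1 = 2 * i + 1 := by omega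
      rw [e1]
      have q1 : (X : ℤ[X]) ^ (2 * i + 1) * X ^ (2 * (n + 1) - 2 * (1 + i) + 2) =
          X ^ (2 * (n + 1) + 1) := by
        rw [← pow_add]; congr 1; omega
      have q2 : (X : ℤ[X]) ^ (2 * i + 1) *
          (X ^ (2 * (n + 1) - 2 * (1 + i) + 2) * X ^ (2 * (n + 1) - 2 * (1 + i) + 2)) =
          X ^ (4 * (n + 1) + 1 - 2 * i) := by
        rw [← pow_add, ← pow_add]; congr 1; omega
      linear_combination (4 * C (c (2 * i + 1))) * q2 - (8 * C (c (2 * i + 1))) * q1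
    rw [Finset.sum_congr rfl step, Finset.sum_sub_distrib, ← Finset.mul_sum, ← Finset.mul_sum,
      ← Finset.sum_mul]
  rw [hσC, heC, hR4, hR5, hL, hSA, hPE]
  ring
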